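/- arXiv:1904.11821 — 4 statements merged into one kernel-verified Lean document; each statement's English description precedes it below -/
import Mathlib

section
/- Let A be an associative commutative algebra over a field k and φ: A → A an algebra automorphism. Then the set Der_φ(A) of φ-derivations of A, equipped with the bracket [D₁,D₂]_φ = φ∘D₁∘φ⁻¹∘D₂∘φ⁻¹ − φ∘D₂∘φ⁻¹∘D₁∘φ⁻¹ and the twist map ψ_φ(D) = φ∘D∘φ⁻¹, is a Hom-Lie algebra: the bracket is bilinear, skew-symmetric, ψ_φ is multiplicative with respect to the bracket, and the Hom-Jacobi identity [ψ_φ(D₁),[D₂,D₃]_φ]_φ + [ψ_φ(D₂),[D₃,D₁]_φ]_φ + [ψ_φ(D₃),[D₁,D₂]_φ]_φ = 0 holds. -/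
variable {k A : Type*} [Field k] [CommRing A] [Algebra k A]

/-- The set of `φ`-derivations of `A`. -/
def phiDer (φ : A ≃ₐ[k] A) : Set (A →ₗ[k] A) :=
  {D | ∀ a b : A, D (a * b) = φ a * D b + D a * φ b}

/-- The twisted bracket `[D₁,D₂]_φ = φ∘D₁∘φ⁻¹∘D₂∘φ⁻¹ − φ∘D₂∘φ⁻¹∘D₁∘φ⁻¹`. -/
def phiBr (φ : A ≃ₐ[k] A) (D1 D2 : A →ₗ[k] A) : A →ₗ[k] A :=
  φ.toLinearMap ∘ₗ D1 ∘ₗ φ.symm.toLinearMap ∘ₗ D2 ∘ₗ φ.symm.toLinearMap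
    - φ.toLinearMap ∘ₗ D2 ∘ₗ φ.symm.toLinearMap ∘ₗ D1 ∘ₗ φ.symm.toLinearMap

/-- The twist map `ψ_φ(D) = φ ∘ D ∘ φ⁻¹`. -/
def phiTw (φ : A ≃ₐ[k] A) (D : A →ₗ[k] A) : A →ₗ[k] A :=
  φ.toLinearMap ∘ₗ D ∘ₗ φ.symm.toLinearMap

lemma phiDer_aux (φ : A ≃ₐ[k] A) {D : A →ₗ[k] A} (hD : D ∈ phiDer φ) (a b : A) :
    D (φ.symm a * φ.symm b) = a * D (φ.symm b) + D (φ.symm a) * b := by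
  rw [hD]; simp

/-- `(Der_φ(A), [·,·]_φ, ψ_φ)` is a Hom-Lie algebra: the bracket lands in `Der_φ(A)`,
is bilinear and skew-symmetric, `ψ_φ` is multiplicative, and Hom-Jacobi holds. -/
theorem phiDerivations_form_homLie_algebra (φ : A ≃ₐ[k] A) :
    (∀ D1 ∈ phiDer φ, ∀ D2 ∈ phiDer φ, phiBr φ D1 D2 ∈ phiDer φ) ∧
    (∀ (D1 D2 D3 : A →ₗ[k] A) (c : k),
      phiBr φ (D1 + D2) D3 = phiBr φ D1 D3 + phiBr φ D2 D3 ∧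
      phiBr φ D1 (D2 + D3) = phiBr φ D1 D2 + phiBr φ D1 D3 ∧
      phiBr φ (c • D1) D2 = c • phiBr φ D1 D2 ∧
      phiBr φ D1 (c • D2) = c • phiBr φ D1 D2) ∧
    (∀ D1 D2 : A →ₗ[k] A, phiBr φ D1 D2 = - phiBr φ D2 D1) ∧
    (∀ D1 D2 : A →ₗ[k] A, phiTw φ (phiBr φ D1 D2) = phiBr φ (phiTw φ D1) (phiTw φ D2)) ∧
    (∀ D1 ∈ phiDer φ, ∀ D2 ∈ phiDer φ, ∀ D3 ∈ phiDer φ,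
      phiBr φ (phiTw φ D1) (phiBr φ D2 D3) + phiBr φ (phiTw φ D2) (phiBr φ D3 D1)
        + phiBr φ (phiTw φ D3) (phiBr φ D1 D2) = 0) := by
  refine ⟨?_, ?_, ?_, ?_, ?_⟩
  · intro D1 h1 D2 h2 a b
    simp only [phiBr, LinearMap.sub_apply, LinearMap.comp_apply,
      AlgEquiv.toLinearMap_apply, map_mul, phiDer_aux φ h1, phiDer_aux φ h2, map_add, map_sub]
    ring
  · intro D1 D2 D3 c
    refine ⟨?_, ?_, ?_, ?_⟩ <;> ext a <;>
      (try simp only [phiBr, LinearMap.add_apply, LinearMap.sub_apply, LinearMap.smul_apply,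
        LinearMap.comp_apply, AlgEquiv.toLinearMap_apply, map_add, map_smul, smul_sub]) <;> abel1
  · intro D1 D2; ext a; simp [phiBr]
  · intro D1 D2; ext a; simp [phiBr, phiTw, LinearMap.comp_apply]
  · intro D1 _ D2 _ D3 _
    ext a
    simp only [phiBr, phiTw, LinearMap.add_apply, LinearMap.sub_apply, LinearMap.comp_apply,
      AlgEquiv.toLinearMap_apply, map_add, map_sub, AlgEquiv.symm_apply_apply,
      LinearMap.zero_apply]
    abel
end

section
/- In a split regular Hom-Lie Rinehart algebra (L,A), if A_α A_β ≠ 0 for weights α, β ∈ Λ ∪ {0}, then α + β ∈ Λ ∪ {0} and A_α A_β ⊆ A_{α+β}. -/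
/-- A (regular) Hom-Lie Rinehart algebra structure over `(A, φ)` on an `A`-module `L`. -/
structure HomLieRinehart (k A L : Type*) [Field k] [CommRing A] [Algebra k A]
    [AddCommGroup L] [Module k L] [Module A L] [IsScalarTower k A L] where
  bracket : L →ₗ[k] L →ₗ[k] L
  φ : A ≃ₐ[k] A
  ψ : L ≃ₗ[k] L
  ρ : L →ₗ[k] (A →ₗ[k] A)
  skew : ∀ x y, bracket x y = - bracket y x
  psi_bracket : ∀ x y, ψ (bracket x y) = bracket (ψ x) (ψ y)
  hom_jacobi : ∀ x y z,
    bracket (ψ x) (bracket y z) + bracket (ψ y) (bracket z x)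
      + bracket (ψ z) (bracket x y) = 0
  psi_smul : ∀ (a : A) (x : L), ψ (a • x) = φ a • ψ x
  rho_deriv : ∀ x (a b : A), ρ x (a * b) = φ a * ρ x b + ρ x a * φ b
  rep : ∀ x y (a : A), ρ (bracket x y) (φ a) = ρ (ψ x) (ρ y a) - ρ (ψ y) (ρ x a)
  rho_psi : ∀ x (a : A), ρ (ψ x) a = φ (ρ x (φ.symm a))
  rho_smul : ∀ (a : A) (x : L) (b : A), ρ (a • x) b = φ a * ρ x b
  leibniz : ∀ x (a : A) y, bracket x (a • y) = φ a • bracket x y + ρ x a • ψ y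

namespace HomLieRinehart

variable {k A L : Type*} [Field k] [CommRing A] [Algebra k A]
    [AddCommGroup L] [Module k L] [Module A L] [IsScalarTower k A L]
variable (R : HomLieRinehart k A L) (H : Submodule k L)

/-- The root space `L_γ` attached to a functional `γ`. -/
def rootSpace (γ : L → k) : Submodule k L where
  carrier := {v | ∀ h ∈ H, R.bracket h v = γ h • R.ψ v}
  add_mem' := by
    intro x y hx hy h hH
    simp [map_add, hx h hH, hy h hH, smul_add]
  zero_mem' := by intro h hH; simp
  smul_mem' := by
    intro c x hx h hH
    rw [map_smul, hx h hH, map_smul, smul_comm]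

/-- The weight space `A_α` attached to a functional `α`. -/
def weightSpace (α : L → k) : Submodule k A where
  carrier := {a | ∀ h ∈ H, R.ρ h a = α h • R.φ a}
  add_mem' := by
    intro x y hx hy h hH
    simp [map_add, hx h hH, hy h hH, smul_add]
  zero_mem' := by intro h hH; simp
  smul_mem' := by
    intro c x hx h hH
    rw [map_smul, hx h hH, map_smul, smul_comm]

/-- The root system `Γ`. -/
def Γset : Set (L → k) := {γ | γ ≠ 0 ∧ R.rootSpace H γ ≠ ⊥}

/-- The weight system `Λ`. -/
def Λset : Set (L → k) := {α | α ≠ 0 ∧ R.weightSpace H α ≠ ⊥}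

/-- `±Γ`. -/
def pmΓ : Set (L → k) := {γ | γ ∈ R.Γset H ∨ -γ ∈ R.Γset H}

/-- `±Λ`. -/
def pmΛ : Set (L → k) := {α | α ∈ R.Λset H ∨ -α ∈ R.Λset H}

/-- `(L, A)` is split with splitting Cartan subalgebra `H`:  `H` is a maximal abelian
subalgebra, `L` is the direct sum of `H` and the root spaces, and `A` is the direct sum
of the weight spaces (which are `φ`-invariant). -/
def IsSplit : Prop :=
  (∀ h ∈ H, ∀ h' ∈ H, R.bracket h h' = 0) ∧
  (∀ v : L, (∀ h ∈ H, R.bracket h v = 0) → v ∈ H) ∧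
  iSupIndep (fun o : Option (R.Γset H) => o.elim H fun γ => R.rootSpace H γ.1) ∧
  (⨆ o : Option (R.Γset H), o.elim H fun γ => R.rootSpace H γ.1) = ⊤ ∧
  iSupIndep (fun o : Option (R.Λset H) =>
    o.elim (R.weightSpace H 0) fun α => R.weightSpace H α.1) ∧
  (⨆ o : Option (R.Λset H), o.elim (R.weightSpace H 0) fun α => R.weightSpace H α.1) = ⊤ ∧
  (∀ α ∈ R.Λset H, ∀ a ∈ R.weightSpace H α, R.φ a ∈ R.weightSpace H α)

/-- The functional `γ ∘ ψ^z`. -/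
def tw (γ : L → k) (z : ℤ) : L → k := fun v => γ ((R.ψ ^ z) v)

/-- The twisted partial sum `ζ₁ψ^{-i} + ζ₂ψ^{-i} + ζ₃ψ^{-i+1} + ⋯ + ζ_{i+1}ψ^{-1}`. -/
def chainSum (ζ : ℕ → L → k) (i : ℕ) : L → k :=
  R.tw (ζ 0) (-(i : ℤ)) + ∑ j ∈ Finset.range i, R.tw (ζ (j + 1)) (-((i : ℤ) - j))

/-- Connection of roots (Definition 3.1). -/
def Connected (γ ξ : L → k) : Prop :=
  (∃ (z : ℤ) (ε : k), (ε = 1 ∨ ε = -1) ∧ ξ = ε • R.tw γ z) ∨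
  (∃ (n : ℕ) (ζ : ℕ → L → k),
    (∀ i ≤ n + 1, ζ i ∈ R.pmΛ H ∪ R.pmΓ H) ∧
    (∃ z : ℤ, ζ 0 = R.tw γ z) ∧
    (∀ i, 1 ≤ i → i ≤ n → R.chainSum ζ i ∈ R.pmΓ H) ∧
    (∃ (m : ℤ) (ε : k), (ε = 1 ∨ ε = -1) ∧
      R.chainSum ζ (n + 1) = ε • R.tw ξ (-m)))

/-- Connection of weights (Definition 4.1). -/
def WConnected (α β : L → k) : Prop :=
  (β = α ∨ β = -α) ∨
  (∃ (n : ℕ) (σ : ℕ → L → k),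
    (∀ i ≤ n + 1, σ i ∈ R.pmΛ H ∪ R.pmΓ H) ∧
    σ 0 = α ∧
    (∀ i, 1 ≤ i → i ≤ n → (∑ j ∈ Finset.range (i + 1), σ j) ∈ R.pmΛ H ∪ R.pmΓ H) ∧
    ((∑ j ∈ Finset.range (n + 2), σ j) = β ∨ (∑ j ∈ Finset.range (n + 2), σ j) = -β))

/-- The connection class `[γ]` of a root `γ`. -/
def connClass (γ : L → k) : Set (L → k) := {ξ ∈ R.Γset H | R.Connected H γ ξ}

/-- The connection class `[α]` of a weight `α`. -/
def wConnClass (α : L → k) : Set (L → k) := {β ∈ R.Λset H | R.WConnected H α β}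

/-- `L_{0,S} = Σ_{ξ∈S, −ξ∈Λ} A_{−ξ}L_ξ + Σ_{ξ∈S} [L_{−ξ}, L_ξ]`, for a set `S` of roots. -/
def L0Of (S : Set (L → k)) : Submodule k L :=
  Submodule.span k
    ({v | ∃ ξ ∈ S, -ξ ∈ R.Λset H ∧
        ∃ a ∈ R.weightSpace H (-ξ), ∃ x ∈ R.rootSpace H ξ, v = a • x} ∪
     {v | ∃ ξ ∈ S, ∃ x ∈ R.rootSpace H (-ξ), ∃ y ∈ R.rootSpace H ξ, v = R.bracket x y})

/-- `L_S = ⊕_{ξ ∈ S} L_ξ`. -/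
def LOf (S : Set (L → k)) : Submodule k L := ⨆ ξ ∈ S, R.rootSpace H ξ

/-- `I_S = L_{0,S} ⊕ L_S`. -/
def IOf (S : Set (L → k)) : Submodule k L := R.L0Of H S ⊔ R.LOf H S

/-- The ideal `I_{[γ]}` associated to the connection class of a root `γ`. -/
def Iclass (γ : L → k) : Submodule k L := R.IOf H (R.connClass H γ)

/-- `A_{0,S} = Σ_{β∈S, −β∈Λ} ρ(L_{−β})(A_β) + Σ_{β∈S} A_{−β}A_β` for a set `S` of weights. -/
def A0Of (S : Set (L → k)) : Submodule k A :=
  Submodule.span k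
    ({a | ∃ β ∈ S, -β ∈ R.Λset H ∧
        ∃ x ∈ R.rootSpace H (-β), ∃ b ∈ R.weightSpace H β, a = R.ρ x b} ∪
     {a | ∃ β ∈ S, ∃ b ∈ R.weightSpace H (-β), ∃ c ∈ R.weightSpace H β, a = b * c})

/-- `A_S = ⊕_{β ∈ S} A_β`. -/
def AOf (S : Set (L → k)) : Submodule k A := ⨆ β ∈ S, R.weightSpace H β

/-- `𝒜_S = A_{0,S} ⊕ A_S`. -/
def calAOf (S : Set (L → k)) : Submodule k A := R.A0Of H S ⊔ R.AOf H S

/-- The ideal `𝒜_{[α]}` associated to the connection class of a weight `α`. -/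
def Aclass (α : L → k) : Submodule k A := R.calAOf H (R.wConnClass H α)

/-- `Σ_{γ∈Γ, −γ∈Λ} A_{−γ}L_γ + Σ_{γ∈Γ} [L_{−γ}, L_γ]`, the canonical subspace of `H`. -/
def HGen : Submodule k L := R.L0Of H (R.Γset H)

/-- An ideal of the Hom-Lie Rinehart algebra `(L, A)`. -/
def IsIdeal (I : Submodule k L) : Prop :=
  (∀ x ∈ I, ∀ y : L, R.bracket x y ∈ I) ∧
  (Submodule.map (R.ψ : L →ₗ[k] L) I = I) ∧
  (∀ (a : A), ∀ x ∈ I, a • x ∈ I) ∧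
  (∀ x ∈ I, ∀ (a : A), ∀ y : L, R.ρ x a • y ∈ I)

/-- The center `Z(L)` is trivial. -/
def CenterTrivial : Prop :=
  ∀ v : L, (∀ y : L, R.bracket v y = 0) → (∀ a : A, R.ρ v a = 0) → v = 0

end HomLieRinehart

open HomLieRinehart

variable {k A L : Type*} [Field k] [CommRing A] [Algebra k A]
    [AddCommGroup L] [Module k L] [Module A L] [IsScalarTower k A L]

/-- Lemma 2.11(3): if `A_α A_β ≠ 0` then `α + β ∈ Λ ∪ {0}` and `A_α A_β ⊆ A_{α+β}`. -/
theorem mul_weightSpaces (R : HomLieRinehart k A L) (H : Submodule k L)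
    (hs : R.IsSplit H) (α β : L → k)
    (hα : α = 0 ∨ α ∈ R.Λset H) (hβ : β = 0 ∨ β ∈ R.Λset H)
    (hne : ∃ a ∈ R.weightSpace H α, ∃ b ∈ R.weightSpace H β, a * b ≠ 0) :
    (α + β = 0 ∨ α + β ∈ R.Λset H) ∧
    ∀ a ∈ R.weightSpace H α, ∀ b ∈ R.weightSpace H β, a * b ∈ R.weightSpace H (α + β) := by
  have key : ∀ a ∈ R.weightSpace H α, ∀ b ∈ R.weightSpace H β,
      a * b ∈ R.weightSpace H (α + β) := by
    intro a ha b hb h hH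
    have := R.rho_deriv h a b
    rw [this, ha h hH, hb h hH]
    show _ = (α h + β h) • R.φ (a * b)
    rw [map_mul, add_smul]
    ring_nf
    rw [mul_smul_comm, mul_smul_comm, mul_comm (R.φ b), add_comm]
  refine ⟨?_, key⟩
  by_cases hz : α + β = 0
  · exact Or.inl hz
  · refine Or.inr ⟨hz, ?_⟩
    obtain ⟨a, ha, b, hb, hab⟩ := hne
    intro hbot
    have : a * b ∈ R.weightSpace H (α + β) := key a ha b hb
    rw [hbot] at this
    exact hab (Submodule.mem_bot k |>.mp this)
end

section
/- In a split regular Hom-Lie Rinehart algebra (L,A), if A_α L_γ ≠ 0 for α ∈ Λ ∪ {0} and γ ∈ Γ ∪ {0}, then α + γ ∈ Γ ∪ {0} and A_α L_γ ⊆ L_{α+γ} (where the product denotes the A-module action on L). -/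
open HomLieRinehart

variable {k A L : Type*} [Field k] [CommRing A] [Algebra k A]
    [AddCommGroup L] [Module k L] [Module A L] [IsScalarTower k A L]

/-- Lemma 2.11(4): if `A_α L_γ ≠ 0` then `α + γ ∈ Γ ∪ {0}` and `A_α L_γ ⊆ L_{α+γ}`. -/
theorem smul_weightSpace_rootSpace (R : HomLieRinehart k A L) (H : Submodule k L)
    (hs : R.IsSplit H) (α γ : L → k)
    (hα : α = 0 ∨ α ∈ R.Λset H) (hγ : γ = 0 ∨ γ ∈ R.Γset H)
    (hne : ∃ a ∈ R.weightSpace H α, ∃ x ∈ R.rootSpace H γ, a • x ≠ 0) :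
    (α + γ = 0 ∨ α + γ ∈ R.Γset H) ∧
    ∀ a ∈ R.weightSpace H α, ∀ x ∈ R.rootSpace H γ, a • x ∈ R.rootSpace H (α + γ) := by
  have key : ∀ a ∈ R.weightSpace H α, ∀ x ∈ R.rootSpace H γ,
      a • x ∈ R.rootSpace H (α + γ) := by
    intro a ha x hx h hH
    have hbr : R.bracket h (a • x) = R.φ a • R.bracket h x + R.ρ h a • R.ψ x :=
      R.leibniz h a x
    rw [hbr, hx h hH, ha h hH, R.psi_smul]
    simp only [Pi.add_apply, add_smul, smul_smul, smul_comm (γ h) (R.φ a)]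
    rw [smul_assoc]
    module
  refine ⟨?_, key⟩
  by_cases h0 : α + γ = 0
  · exact Or.inl h0
  · refine Or.inr ⟨h0, ?_⟩
    obtain ⟨a, ha, x, hx, hne⟩ := hne
    intro hbot
    exact hne (by simpa [hbot] using key a ha x hx)
end

section
/- The connection relation ≈ on the weight system Λ of a split regular Hom-Lie Rinehart algebra, defined by α ≈ β if and only if α is connected to β, is an equivalence relation on Λ. -/
open HomLieRinehart

variable {k A L : Type*} [Field k] [CommRing A] [Algebra k A]
    [AddCommGroup L] [Module k L] [Module A L] [IsScalarTower k A L]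

section Aux

variable (R : HomLieRinehart k A L) (H : Submodule k L)

lemma pm_neg {x : L → k} (hx : x ∈ R.pmΛ H ∪ R.pmΓ H) :
    -x ∈ R.pmΛ H ∪ R.pmΓ H := by
  simp only [pmΛ, pmΓ, Set.mem_union, Set.mem_setOf_eq, neg_neg] at *
  tauto

lemma pm_smul {ε : k} {x : L → k} (hε : ε = 1 ∨ ε = -1)
    (hx : x ∈ R.pmΛ H ∪ R.pmΓ H) : ε • x ∈ R.pmΛ H ∪ R.pmΓ H := by
  rcases hε with rfl | rfl
  · simpa using hx
  · simpa using pm_neg R H hx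

lemma lam_pm {α : L → k} (hα : α ∈ R.Λset H) : α ∈ R.pmΛ H ∪ R.pmΓ H :=
  Or.inl (Or.inl hα)

/-- extract an ε-form of the final condition -/
lemma tot_eps {β s : L → k} (h : s = β ∨ s = -β) :
    ∃ ε : k, (ε = 1 ∨ ε = -1) ∧ s = ε • β := by
  rcases h with h | h
  · exact ⟨1, Or.inl rfl, by simpa using h⟩
  · exact ⟨-1, Or.inr rfl, by simpa using h⟩

lemma eps_tot {β s : L → k} {ε : k} (hε : ε = 1 ∨ ε = -1) (h : s = ε • β) :
    s = β ∨ s = -β := by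
  rcases hε with rfl | rfl
  · left; simpa using h
  · right; simpa using h

/-- negating a whole chain -/
lemma WConnected_neg_left {α β : L → k} (h : R.WConnected H α β) :
    R.WConnected H (-α) β := by
  rcases h with (h | h) | ⟨n, σ, hmem, h0, hmid, htot⟩
  · exact Or.inl (Or.inr (by simp [h]))
  · exact Or.inl (Or.inl (by simp [h]))
  · refine Or.inr ⟨n, fun i => -σ i, fun i hi => pm_neg R H (hmem i hi), by simp [h0], ?_, ?_⟩
    · intro i h1 h2
      have : (∑ j ∈ Finset.range (i + 1), -σ j) = -∑ j ∈ Finset.range (i + 1), σ j := by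
        simp
      rw [this]
      exact pm_neg R H (hmid i h1 h2)
    · have : (∑ j ∈ Finset.range (n + 2), -σ j) = -∑ j ∈ Finset.range (n + 2), σ j := by
        simp
      rw [this]
      rcases htot with h | h
      · exact Or.inr (by simp [h])
      · exact Or.inl (by simp [h])

lemma WConnected_neg_right {α β : L → k} (h : R.WConnected H α β) :
    R.WConnected H α (-β) := by
  rcases h with (h | h) | ⟨n, σ, hmem, h0, hmid, htot⟩
  · exact Or.inl (Or.inr (by simp [h]))
  · exact Or.inl (Or.inl (by simp [h]))
  · refine Or.inr ⟨n, σ, hmem, h0, hmid, ?_⟩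
    rcases htot with h | h
    · exact Or.inr (by simp [h])
    · exact Or.inl (by simp [h])

end Aux

/-- Proposition 4.2: the connection relation `≈` is an equivalence relation on `Λ`. -/
theorem wConnected_equivalence (R : HomLieRinehart k A L) (H : Submodule k L)
    (hs : R.IsSplit H) :
    (∀ α ∈ R.Λset H, R.WConnected H α α) ∧
    (∀ α ∈ R.Λset H, ∀ β ∈ R.Λset H, R.WConnected H α β → R.WConnected H β α) ∧
    (∀ α ∈ R.Λset H, ∀ β ∈ R.Λset H, ∀ μ ∈ R.Λset H,
      R.WConnected H α β → R.WConnected H β μ → R.WConnected H α μ) := by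
  refine ⟨fun α _ => Or.inl (Or.inl rfl), ?_, ?_⟩
  · -- symmetry
    intro α hα β hβ h
    rcases h with (h | h) | ⟨n, σ, hmem, h0, hmid, htot⟩
    · exact Or.inl (Or.inl h.symm)
    · exact Or.inl (Or.inr (by simp [h]))
    · obtain ⟨ε, hε, hsum⟩ := tot_eps htot
      have hε2 : ε * ε = 1 := by rcases hε with rfl | rfl <;> norm_num
      set τ : ℕ → L → k := fun i => if i = 0 then β else (-ε) • σ (n + 2 - i) with hτ
      have key : ∀ i ≤ n + 1,
          (∑ j ∈ Finset.range (i + 1), τ j)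
            = ε • ∑ j ∈ Finset.range (n + 2 - i), σ j := by
        intro i hi
        induction i with
        | zero =>
          rw [Nat.sub_zero, hsum, smul_smul, hε2, one_smul]
          simp [hτ]
        | succ i ih =>
          have hi' : i ≤ n + 1 := by omega
          have e1 : n + 2 - i = (n + 1 - i) + 1 := by omega
          have e2 : n + 2 - (i + 1) = n + 1 - i := by omega
          rw [Finset.sum_range_succ, ih hi', e1, Finset.sum_range_succ, smul_add, e2]
          have e3 : n + 2 - (i + 1) = n + 1 - i := by omega
          have : τ (i + 1) = (-ε) • σ (n + 1 - i) := by
            simp only [hτ]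
            rw [if_neg (Nat.succ_ne_zero i), e3]
          rw [this]
          abel_nf
          simp [smul_smul]
      refine Or.inr ⟨n, τ, ?_, by simp [hτ], ?_, ?_⟩
      · intro i hi
        by_cases h0i : i = 0
        · subst h0i; simpa [hτ] using lam_pm R H hβ
        · have : τ i = (-ε) • σ (n + 2 - i) := by simp [hτ, h0i]
          rw [this]
          refine pm_smul R H ?_ (hmem _ (by omega))
          rcases hε with rfl | rfl
          · exact Or.inr rfl
          · exact Or.inl (by norm_num)
      · intro i h1 h2
        rw [key i (by omega)]
        have e1 : n + 2 - i = (n + 1 - i) + 1 := by omega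
        rw [e1]
        exact pm_smul R H hε (hmid (n + 1 - i) (by omega) (by omega))
      · have := key (n + 1) le_rfl
        rw [show n + 2 - (n + 1) = 1 by omega, Finset.sum_range_one, h0] at this
        exact eps_tot hε this
  · -- transitivity
    intro α hα β hβ μ hμ h1 h2
    rcases h1 with (h1 | h1) | ⟨n, σ, hmem1, h01, hmid1, htot1⟩
    · subst h1; exact h2
    · have := WConnected_neg_left R H h2
      rwa [h1, neg_neg] at this
    · rcases h2 with (h2 | h2) | ⟨m, τ, hmem2, h02, hmid2, htot2⟩
      · subst h2; exact Or.inr ⟨n, σ, hmem1, h01, hmid1, htot1⟩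
      · have hc : R.WConnected H α β := Or.inr ⟨n, σ, hmem1, h01, hmid1, htot1⟩
        have := WConnected_neg_right R H hc
        rwa [← h2] at this
      · obtain ⟨ε₁, hε₁, hsum1⟩ := tot_eps htot1
        obtain ⟨ε₂, hε₂, hsum2⟩ := tot_eps htot2
        set υ : ℕ → L → k :=
          fun i => if i ≤ n + 1 then σ i else ε₁ • τ (i - (n + 1)) with hυ
        have hυlow : ∀ i ≤ n + 1, υ i = σ i := by
          intro i hi; simp [hυ, hi]
        have key2 : ∀ j ≤ m + 1,
            (∑ t ∈ Finset.range (n + 2 + j), υ t)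
              = ε₁ • ∑ t ∈ Finset.range (j + 1), τ t := by
          intro j hj
          induction j with
          | zero =>
            have : (∑ t ∈ Finset.range (n + 2 + 0), υ t)
                = ∑ t ∈ Finset.range (n + 2), σ t := by
              refine Finset.sum_congr (by norm_num) ?_
              intro i hi
              exact hυlow i (by have := Finset.mem_range.mp hi; omega)
            rw [this, hsum1, Finset.sum_range_one, h02]
          | succ j ih =>
            have e : n + 2 + (j + 1) = (n + 2 + j) + 1 := by omega
            have hv : υ (n + 2 + j) = ε₁ • τ (j + 1) := by
              simp only [hυ]
              rw [if_neg (by omega), show n + 2 + j - (n + 1) = j + 1 from by omega]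
            rw [e, Finset.sum_range_succ, ih (by omega), hv,
                Finset.sum_range_succ (f := τ) (n := j + 1), smul_add]
        refine Or.inr ⟨n + m + 1, υ, ?_, ?_, ?_, ?_⟩
        · intro i hi
          by_cases hc : i ≤ n + 1
          · rw [hυlow i hc]; exact hmem1 i hc
          · have : υ i = ε₁ • τ (i - (n + 1)) := by simp [hυ, hc]
            rw [this]
            exact pm_smul R H hε₁ (hmem2 _ (by omega))
        · rw [hυlow 0 (by omega)]; exact h01
        · intro i hi1 hi2
          by_cases hc : i ≤ n
          · have : (∑ j ∈ Finset.range (i + 1), υ j)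
                = ∑ j ∈ Finset.range (i + 1), σ j := by
              refine Finset.sum_congr rfl ?_
              intro t ht
              exact hυlow t (by have := Finset.mem_range.mp ht; omega)
            rw [this]
            exact hmid1 i hi1 hc
          · have hj : i + 1 = n + 2 + (i - (n + 1)) := by omega
            rw [hj, key2 _ (by omega)]
            by_cases hz : i - (n + 1) = 0
            · rw [hz, Finset.sum_range_one, h02]
              exact pm_smul R H hε₁ (lam_pm R H hβ)
            · exact pm_smul R H hε₁ (hmid2 _ (by omega) (by omega))
        · have := key2 (m + 1) le_rfl
          rw [show n + 2 + (m + 1) = n + m + 1 + 2 by omega] at this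
          rw [this, hsum2, smul_smul]
          refine eps_tot ?_ rfl
          rcases hε₁ with rfl | rfl <;> rcases hε₂ with rfl | rfl <;> norm_num
end
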